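/- arXiv:2204.01085 — 2 statements merged into one kernel-verified Lean document; each statement's English description precedes it below -/
import Mathlib

section
/- (i) For any ordered pair (ℓ1, ℓ2) of distinct intersecting lines of A_H both lying in BF, and any point A1 on ℓ1 not on ℓ2, there exist μ ∈ F and a collineation φ of A_H such that φ(ℓ1) is the line y = x·(μ,0), φ(ℓ2) is the vertical line x = (0,0), and φ(A1) = ((0,1),(0,μ)). (ii) For any ordered pair (ℓ1, ℓ2) of distinct parallel lines of A_H both lying in BF, and any point A1 on ℓ1, there exist κ ∈ H with κ ≠ (0,0) and a collineation φ of A_H such that φ(ℓ1) is the horizontal line y = κ, φ(ℓ2) is the horizontal line y = (0,0), and φ(A1) = ((0,1), κ). -/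
open Polynomial

/-- The Hall system multiplication on `F × F`, with defining polynomial `x^2 - r*x - s`. -/
def hallMul {F : Type*} [Field F] [DecidableEq F] (r s : F) (a b : F × F) : F × F :=
  if b.2 = 0 then (a.1 * b.1, a.2 * b.1)
  else (a.1 * b.1 - a.2 * b.2⁻¹ * (b.1 ^ 2 - r * b.1 - s),
        a.1 * b.2 - a.2 * b.1 + a.2 * r)

/-- Vertical line `[c] = {(c, y)}` in the Hall affine plane. -/
def vertLine {F : Type*} (c : F × F) : Set ((F × F) × (F × F)) := {P | P.1 = c}

/-- Non-vertical line `[m, k] = {(x, x·m + k)}` in the Hall affine plane. -/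
def slopeLine {F : Type*} [Field F] [DecidableEq F] (r s : F) (m k : F × F) :
    Set ((F × F) × (F × F)) :=
  {P | P.2 = hallMul r s P.1 m + k}

/-- The lines of the Hall affine plane `A_H`. -/
def IsHallLine {F : Type*} [Field F] [DecidableEq F] (r s : F)
    (ℓ : Set ((F × F) × (F × F))) : Prop :=
  (∃ c : F × F, ℓ = vertLine c) ∨ ∃ m k : F × F, ℓ = slopeLine r s m k

/-- A collineation of the Hall affine plane: a bijection of the point set mapping
every line onto a line. -/
def IsCollineation {F : Type*} [Field F] [DecidableEq F] (r s : F)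
    (φ : (F × F) × (F × F) → (F × F) × (F × F)) : Prop :=
  Function.Bijective φ ∧ ∀ ℓ, IsHallLine r s ℓ → IsHallLine r s (φ '' ℓ)

/-- The BF lines: vertical lines and type 1 lines (slope in the basefield). -/
def BFlines {F : Type*} [Field F] [DecidableEq F] (r s : F) :
    Set (Set ((F × F) × (F × F))) :=
  {ℓ | (∃ c : F × F, ℓ = vertLine c) ∨ ∃ m k : F × F, m.2 = 0 ∧ ℓ = slopeLine r s m k}

/-- The NBF lines: type 2 lines (slope not in the basefield). -/
def NBFlines {F : Type*} [Field F] [DecidableEq F] (r s : F) :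
    Set (Set ((F × F) × (F × F))) :=
  {ℓ | ∃ m k : F × F, m.2 ≠ 0 ∧ ℓ = slopeLine r s m k}

set_option linter.unusedSectionVars false
section HallAux
variable {F : Type*} [Field F] [DecidableEq F]

theorem hallMul_pair1 (r s : F) (x : F × F) (μ : F) :
    hallMul r s x (μ, 0) = (x.1 * μ, x.2 * μ) := by simp [hallMul]
theorem hallMul_zero_right (r s : F) (x : F × F) : hallMul r s x 0 = 0 := by
  simp [hallMul, Prod.ext_iff]
theorem hallMul_pair2 (r s : F) (x : F × F) (m1 m2 : F) (h : m2 ≠ 0) :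
    hallMul r s x (m1, m2) =
      (x.1 * m1 - x.2 * m2⁻¹ * (m1 ^ 2 - r * m1 - s),
       x.1 * m2 - x.2 * m1 + x.2 * r) := by simp [hallMul, h]
theorem hallMul_add (r s : F) (x y m : F × F) :
    hallMul r s (x + y) m = hallMul r s x m + hallMul r s y m := by
  rcases m with ⟨m1, m2⟩
  by_cases h : m2 = 0
  · subst h
    simp only [hallMul_pair1, Prod.fst_add, Prod.snd_add, Prod.mk_add_mk, Prod.mk.injEq]
    constructor <;> ring
  · simp only [hallMul_pair2 _ _ _ _ _ h, Prod.fst_add, Prod.snd_add, Prod.mk_add_mk,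
      Prod.mk.injEq]
    constructor <;> ring
theorem line_ncard [Fintype F] {r s : F} {ℓ : Set ((F × F) × (F × F))}
    (h : IsHallLine r s ℓ) : ℓ.ncard = Nat.card (F × F) := by
  obtain ⟨c, rfl⟩ | ⟨m, k, rfl⟩ := h
  · have he : vertLine c = (fun y : F × F => ((c, y) : (F × F) × (F × F))) '' Set.univ := by
      ext P
      simp only [vertLine, Set.mem_setOf_eq, Set.image_univ, Set.mem_range]
      exact ⟨fun h => ⟨P.2, by rw [← h]⟩, by rintro ⟨y, rfl⟩; rfl⟩
    rw [he, Set.ncard_image_of_injective _ (fun a b hab => by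
      simpa [Prod.ext_iff] using hab), Set.ncard_univ]
  · have he : slopeLine r s m k
        = (fun x : F × F => ((x, hallMul r s x m + k) : (F × F) × (F × F))) '' Set.univ := by
      ext P
      simp only [slopeLine, Set.mem_setOf_eq, Set.image_univ, Set.mem_range]
      exact ⟨fun h => ⟨P.1, by rw [← h]⟩, by rintro ⟨x, rfl⟩; rfl⟩
    rw [he, Set.ncard_image_of_injective _ (fun a b hab => by
      simpa [Prod.ext_iff] using congrArg Prod.fst hab), Set.ncard_univ]
theorem image_line_eq [Fintype F] (r s : F) {φ : (F × F) × (F × F) → (F × F) × (F × F)}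
    (hinj : Function.Injective φ) {ℓ ℓ' : Set ((F × F) × (F × F))}
    (h1 : IsHallLine r s ℓ) (h2 : IsHallLine r s ℓ')
    (hsub : φ '' ℓ ⊆ ℓ') : φ '' ℓ = ℓ' := by
  refine Set.eq_of_subset_of_ncard_le hsub ?_ (Set.toFinite _)
  rw [Set.ncard_image_of_injective _ hinj, line_ncard h1, line_ncard h2]

/-- translation -/
def trq (u v : F × F) : (F × F) × (F × F) → (F × F) × (F × F) :=
  fun P => (P.1 + u, P.2 + v)

/-- the "phi_c" collineation -/
def phq (r s c : F) : (F × F) × (F × F) → (F × F) × (F × F) :=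
  fun P => ((P.2.1 - c * P.1.1, P.2.2 - c * P.1.2),
            (c * P.2.1 - (r * c + s) * P.1.1, c * P.2.2 - (r * c + s) * P.1.2))

/-- the conjugation collineation, A = [[a,b],[c,d]] acting on the right -/
def cgq (a b c d : F) : (F × F) × (F × F) → (F × F) × (F × F) :=
  fun P => ((P.1.1 * a + P.1.2 * c, P.1.1 * b + P.1.2 * d),
            (P.2.1 * a + P.2.2 * c, P.2.1 * b + P.2.2 * d))

theorem trq_bij (u v : F × F) : Function.Bijective (trq (F := F) u v) := by
  refine Function.bijective_iff_has_inverse.mpr ⟨fun P => (P.1 - u, P.2 - v), ?_, ?_⟩ <;>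
    intro P <;> simp [trq]

theorem phq_bij (r s c : F) (hc : c ^ 2 - r * c - s ≠ 0) :
    Function.Bijective (phq (F := F) r s c) := by
  refine Function.bijective_iff_has_inverse.mpr
    ⟨fun P => (((P.2.1 - c * P.1.1) / (c ^ 2 - r * c - s),
                (P.2.2 - c * P.1.2) / (c ^ 2 - r * c - s)),
               ((c * P.2.1 - (r * c + s) * P.1.1) / (c ^ 2 - r * c - s),
                (c * P.2.2 - (r * c + s) * P.1.2) / (c ^ 2 - r * c - s))), ?_, ?_⟩ <;>
  · rintro ⟨⟨x1, x2⟩, y1, y2⟩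
    simp only [phq, Prod.mk.injEq]
    refine ⟨⟨?_, ?_⟩, ?_, ?_⟩ <;> field_simp <;> rw [div_eq_iff (by intro h; apply hc; linear_combination h)] <;> ring

theorem cgq_bij (a b c d : F) (hD : a * d - b * c ≠ 0) :
    Function.Bijective (cgq (F := F) a b c d) := by
  refine Function.bijective_iff_has_inverse.mpr
    ⟨cgq (d / (a * d - b * c)) (-b / (a * d - b * c)) (-c / (a * d - b * c))
      (a / (a * d - b * c)), ?_, ?_⟩ <;>
  · rintro ⟨⟨x1, x2⟩, y1, y2⟩
    simp only [cgq, Prod.mk.injEq]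
    refine ⟨⟨?_, ?_⟩, ?_, ?_⟩ <;> field_simp <;> rw [div_eq_iff (by intro h; apply hD; linear_combination h)] <;> ring

theorem comp_col {r s : F} {φ ψ : (F × F) × (F × F) → (F × F) × (F × F)}
    (hφ : IsCollineation r s φ) (hψ : IsCollineation r s ψ) :
    IsCollineation r s (ψ ∘ φ) :=
  ⟨hψ.1.comp hφ.1, fun ℓ hℓ => by
    rw [Set.image_comp]; exact hψ.2 _ (hφ.2 _ hℓ)⟩

theorem trq_col [Fintype F] (r s : F) (u v : F × F) :
    IsCollineation r s (trq (F := F) u v) := by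
  refine ⟨trq_bij u v, fun ℓ hℓ => ?_⟩
  obtain ⟨c, rfl⟩ | ⟨m, k, rfl⟩ := hℓ
  · refine Or.inl ⟨c + u, image_line_eq r s (trq_bij u v).1 (Or.inl ⟨c, rfl⟩)
      (Or.inl ⟨c + u, rfl⟩) ?_⟩
    rintro Q ⟨P, hP, rfl⟩
    simp only [vertLine, Set.mem_setOf_eq] at hP ⊢
    simp [trq, hP]
  · refine Or.inr ⟨m, k + v - hallMul r s u m, image_line_eq r s (trq_bij u v).1
      (Or.inr ⟨m, k, rfl⟩) (Or.inr ⟨_, _, rfl⟩) ?_⟩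
    rintro Q ⟨P, hP, rfl⟩
    simp only [slopeLine, Set.mem_setOf_eq] at hP ⊢
    simp only [trq, hallMul_add, hP]
    abel

theorem phq_col [Fintype F] (r s c : F) (hc : c ^ 2 - r * c - s ≠ 0) :
    IsCollineation r s (phq (F := F) r s c) := by
  refine ⟨phq_bij r s c hc, fun ℓ hℓ => ?_⟩
  obtain ⟨k, rfl⟩ | ⟨⟨m1, m2⟩, k, rfl⟩ := hℓ
  · -- vertical ↦ slope (c,0)
    refine Or.inr ⟨(c, 0), ((c ^ 2 - r * c - s) * k.1, (c ^ 2 - r * c - s) * k.2),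
      image_line_eq r s (phq_bij r s c hc).1 (Or.inl ⟨k, rfl⟩) (Or.inr ⟨_, _, rfl⟩) ?_⟩
    rintro Q ⟨⟨x, y⟩, hP, rfl⟩
    simp only [vertLine, Set.mem_setOf_eq] at hP
    subst hP
    simp only [slopeLine, Set.mem_setOf_eq, phq, hallMul_pair1, Prod.mk_add_mk,
      Prod.mk.injEq]
    constructor <;> ring
  · by_cases h2 : m2 = 0
    · subst h2
      by_cases h1 : m1 = c
      · -- slope (c,0) ↦ vertical
        refine Or.inl ⟨k, image_line_eq r s (phq_bij r s c hc).1 (Or.inr ⟨_, _, rfl⟩)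
          (Or.inl ⟨k, rfl⟩) ?_⟩
        rintro Q ⟨⟨x, y⟩, hP, rfl⟩
        simp only [slopeLine, Set.mem_setOf_eq, hallMul_pair1, Prod.ext_iff,
          Prod.fst_add, Prod.snd_add] at hP
        obtain ⟨e1, e2⟩ := hP
        simp only [vertLine, Set.mem_setOf_eq, phq, Prod.ext_iff]
        rw [e1, e2, h1]
        constructor <;> ring
      · -- slope (m1,0), m1 ≠ c
        have hd : m1 - c ≠ 0 := sub_ne_zero.mpr h1
        refine Or.inr ⟨((c * m1 - r * c - s) / (m1 - c), 0),
          ((c - (c * m1 - r * c - s) / (m1 - c)) * k.1,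
           (c - (c * m1 - r * c - s) / (m1 - c)) * k.2),
          image_line_eq r s (phq_bij r s c hc).1 (Or.inr ⟨_, _, rfl⟩) (Or.inr ⟨_, _, rfl⟩) ?_⟩
        rintro Q ⟨⟨x, y⟩, hP, rfl⟩
        simp only [slopeLine, Set.mem_setOf_eq, hallMul_pair1, Prod.ext_iff,
          Prod.fst_add, Prod.snd_add] at hP
        obtain ⟨e1, e2⟩ := hP
        simp only [slopeLine, Set.mem_setOf_eq, phq, hallMul_pair1, Prod.ext_iff,
          Prod.fst_add, Prod.snd_add]
        rw [e1, e2]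
        constructor <;> (field_simp; ring)
    · -- type 2
      have hn2 : -m2 ≠ 0 := neg_ne_zero.mpr h2
      refine Or.inr ⟨(r - m1, -m2),
        ((c * k.1, c * k.2) - hallMul r s k (r - m1, -m2)),
        image_line_eq r s (phq_bij r s c hc).1 (Or.inr ⟨_, _, rfl⟩) (Or.inr ⟨_, _, rfl⟩) ?_⟩
      rintro Q ⟨⟨x, y⟩, hP, rfl⟩
      simp only [slopeLine, Set.mem_setOf_eq, hallMul_pair2 _ _ _ _ _ h2, Prod.ext_iff,
        Prod.fst_add, Prod.snd_add] at hP
      obtain ⟨e1, e2⟩ := hP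
      simp only [slopeLine, Set.mem_setOf_eq, phq, hallMul_pair2 _ _ _ _ _ h2,
        hallMul_pair2 _ _ _ _ _ hn2, Prod.mk_sub_mk, Prod.ext_iff,
        Prod.fst_add, Prod.snd_add, Prod.fst_sub, Prod.snd_sub]
      rw [e1, e2]
      constructor <;> (field_simp; ring)

set_option maxHeartbeats 1600000 in
theorem cgq_col [Fintype F] (r s : F) (hroot : ∀ t : F, t ^ 2 - r * t - s ≠ 0)
    (a b c d : F) (hD : a * d - b * c ≠ 0) :
    IsCollineation r s (cgq (F := F) a b c d) := by
  refine ⟨cgq_bij a b c d hD, fun ℓ hℓ => ?_⟩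
  obtain ⟨k, rfl⟩ | ⟨⟨m1, m2⟩, k, rfl⟩ := hℓ
  · refine Or.inl ⟨(k.1 * a + k.2 * c, k.1 * b + k.2 * d),
      image_line_eq r s (cgq_bij a b c d hD).1 (Or.inl ⟨k, rfl⟩) (Or.inl ⟨_, rfl⟩) ?_⟩
    rintro Q ⟨⟨x, y⟩, hP, rfl⟩
    simp only [vertLine, Set.mem_setOf_eq] at hP
    subst hP
    simp [vertLine, cgq]
  · by_cases h2 : m2 = 0
    · subst h2
      refine Or.inr ⟨(m1, 0), (k.1 * a + k.2 * c, k.1 * b + k.2 * d),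
        image_line_eq r s (cgq_bij a b c d hD).1 (Or.inr ⟨_, _, rfl⟩)
          (Or.inr ⟨_, _, rfl⟩) ?_⟩
      rintro Q ⟨⟨x, y⟩, hP, rfl⟩
      simp only [slopeLine, Set.mem_setOf_eq, hallMul_pair1, Prod.ext_iff,
        Prod.fst_add, Prod.snd_add] at hP
      obtain ⟨e1, e2⟩ := hP
      simp only [slopeLine, Set.mem_setOf_eq, cgq, hallMul_pair1, Prod.ext_iff,
        Prod.fst_add, Prod.snd_add]
      rw [e1, e2]
      constructor <;> ring
    · -- type 2 under conjugation
      have hE2 : b ^ 2 * (m1 ^ 2 - r * m1 - s) + b * d * m2 * (2 * m1 - r)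
          + d ^ 2 * m2 ^ 2 ≠ 0 := by
        by_cases hb : b = 0
        · subst hb
          have hdne : d ≠ 0 := by
            intro hdz
            apply hD
            rw [hdz]
            ring
          intro hE
          apply hdne
          have h' : d ^ 2 * m2 ^ 2 = 0 := by linear_combination hE
          rcases mul_eq_zero.mp h' with h'' | h''
          · exact pow_eq_zero_iff (two_ne_zero) |>.mp h''
          · exact absurd (pow_eq_zero_iff (two_ne_zero) |>.mp h'') h2
        · intro hE
          have h3 : (b * m1 + d * m2) ^ 2 - r * (b * m1 + d * m2) * b - s * b ^ 2 = 0 := by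
            linear_combination hE
          refine hroot ((b * m1 + d * m2) / b) ?_
          have h4 : ((b * m1 + d * m2) / b) ^ 2 - r * ((b * m1 + d * m2) / b) - s
              = ((b * m1 + d * m2) ^ 2 - r * (b * m1 + d * m2) * b - s * b ^ 2) / b ^ 2 := by
            field_simp
          rw [h4, h3, zero_div]
      have hn2 : (b ^ 2 * (m1 ^ 2 - r * m1 - s) + b * d * m2 * (2 * m1 - r)
          + d ^ 2 * m2 ^ 2) / ((a * d - b * c) * m2) ≠ 0 :=
        div_ne_zero hE2 (mul_ne_zero hD h2)
      refine Or.inr ⟨((a * d * m1 * m2 + a * b * (m1 ^ 2 - r * m1 - s) + c * d * m2 ^ 2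
          - b * c * m2 * (r - m1)) / ((a * d - b * c) * m2),
          (b ^ 2 * (m1 ^ 2 - r * m1 - s) + b * d * m2 * (2 * m1 - r) + d ^ 2 * m2 ^ 2)
            / ((a * d - b * c) * m2)),
        (k.1 * a + k.2 * c, k.1 * b + k.2 * d),
        image_line_eq r s (cgq_bij a b c d hD).1 (Or.inr ⟨_, _, rfl⟩)
          (Or.inr ⟨_, _, rfl⟩) ?_⟩
      have key : ((a * d * m1 * m2 + a * b * (m1 ^ 2 - r * m1 - s) + c * d * m2 ^ 2
            - b * c * m2 * (r - m1)) / ((a * d - b * c) * m2)) ^ 2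
          - r * ((a * d * m1 * m2 + a * b * (m1 ^ 2 - r * m1 - s) + c * d * m2 ^ 2
            - b * c * m2 * (r - m1)) / ((a * d - b * c) * m2)) - s
          = -((-(a * c * m1 * m2) - a ^ 2 * (m1 ^ 2 - r * m1 - s) - c ^ 2 * m2 ^ 2
              + a * c * m2 * (r - m1)) / ((a * d - b * c) * m2))
            * ((b ^ 2 * (m1 ^ 2 - r * m1 - s) + b * d * m2 * (2 * m1 - r) + d ^ 2 * m2 ^ 2)
              / ((a * d - b * c) * m2)) := by
        field_simp
        ring
      have key2 : ((b ^ 2 * (m1 ^ 2 - r * m1 - s) + b * d * m2 * (2 * m1 - r) + d ^ 2 * m2 ^ 2) / ((a * d - b * c) * m2))⁻¹ * (((a * d * m1 * m2 + a * b * (m1 ^ 2 - r * m1 - s) + c * d * m2 ^ 2 - b * c * m2 * (r - m1)) / ((a * d - b * c) * m2)) ^ 2 - r * ((a * d * m1 * m2 + a * b * (m1 ^ 2 - r * m1 - s) + c * d * m2 ^ 2 - b * c * m2 * (r - m1)) / ((a * d - b * c) * m2)) - s) = -((-(a * c * m1 * m2) - a ^ 2 * (m1 ^ 2 - r * m1 -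 s) - c ^ 2 * m2 ^ 2 + a * c * m2 * (r - m1)) / ((a * d - b * c) * m2)) := by
        rw [key, mul_comm (-((-(a * c * m1 * m2) - a ^ 2 * (m1 ^ 2 - r * m1 - s) - c ^ 2 * m2 ^ 2 + a * c * m2 * (r - m1)) / ((a * d - b * c) * m2))), ← mul_assoc, inv_mul_cancel₀ hn2, one_mul]
      have hmn : ∀ z : F × F, hallMul r s z (((a * d * m1 * m2 + a * b * (m1 ^ 2 - r * m1 - s) + c * d * m2 ^ 2 - b * c * m2 * (r - m1)) / ((a * d - b * c) * m2)), ((b ^ 2 * (m1 ^ 2 - r * m1 - s) + b * d * m2 * (2 * m1 - r) + d ^ 2 * m2 ^ 2) / ((a * d - b * c) * m2)))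
          = (z.1 * ((a * d * m1 * m2 + a * b * (m1 ^ 2 - r * m1 - s) + c * d * m2 ^ 2 - b * c * m2 * (r - m1)) / ((a * d - b * c) * m2)) + z.2 * ((-(a * c * m1 * m2) - a ^ 2 * (m1 ^ 2 - r * m1 - s) - c ^ 2 * m2 ^ 2 + a * c * m2 * (r - m1)) / ((a * d - b * c) * m2)), z.1 * ((b ^ 2 * (m1 ^ 2 - r * m1 - s) + b * d * m2 * (2 * m1 - r) + d ^ 2 * m2 ^ 2) / ((a * d - b * c) * m2)) - z.2 * ((a * d * m1 * m2 + a * b * (m1 ^ 2 - r * m1 - s) + c * d * m2 ^ 2 - b * c * m2 * (r - m1)) / ((a * d - b * c) * m2)) + z.2 * r) := by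
        intro z
        rw [hallMul_pair2 _ _ _ _ _ hn2]
        refine Prod.ext ?_ rfl
        show z.1 * ((a * d * m1 * m2 + a * b * (m1 ^ 2 - r * m1 - s) + c * d * m2 ^ 2 - b * c * m2 * (r - m1)) / ((a * d - b * c) * m2)) - z.2 * ((b ^ 2 * (m1 ^ 2 - r * m1 - s) + b * d * m2 * (2 * m1 - r) + d ^ 2 * m2 ^ 2) / ((a * d - b * c) * m2))⁻¹ * (((a * d * m1 * m2 + a * b * (m1 ^ 2 - r * m1 - s) + c * d * m2 ^ 2 - b * c * m2 * (r - m1)) / ((a * d - b * c) * m2)) ^ 2 - r * ((a * d * m1 * m2 + a * b * (m1 ^ 2 - r * m1 - s) + c * d * m2 ^ 2 - b * c * m2 * (r - m1)) / ((a * d - b * c) * m2)) - s) = _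
        rw [mul_assoc z.2, key2]
        ring
      rintro Q ⟨⟨x, y⟩, hP, rfl⟩
      simp only [slopeLine, Set.mem_setOf_eq, hallMul_pair2 _ _ _ _ _ h2, Prod.ext_iff,
        Prod.fst_add, Prod.snd_add] at hP
      obtain ⟨e1, e2⟩ := hP
      simp only [slopeLine, Set.mem_setOf_eq, cgq, hmn, Prod.ext_iff,
        Prod.fst_add, Prod.snd_add]
      rw [e1, e2]
      constructor <;> (field_simp [show a * d - c * b ≠ 0 by intro h; apply hD; linear_combination h, show d * a - b * c ≠ 0 by intro h; apply hD; linear_combination h]; ring)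

theorem no_root {F : Type*} [Field F] {r s : F}
    (hirr : Irreducible (X ^ 2 - C r * X - C s : F[X])) (c : F) :
    c ^ 2 - r * c - s ≠ 0 := by
  intro h
  have hroot : IsRoot (X ^ 2 - C r * X - C s : F[X]) c := by
    simp [IsRoot]
    linear_combination h
  obtain ⟨g, hg⟩ := dvd_iff_isRoot.mpr hroot
  have hf2 : (X ^ 2 - C r * X - C s : F[X]).natDegree = 2 := by compute_degree!
  have hfne : (X ^ 2 - C r * X - C s : F[X]) ≠ 0 := fun hf => by simp [hf] at hf2
  have hgne : g ≠ 0 := fun hgz => hfne (by rw [hg, hgz, mul_zero])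
  rcases hirr.isUnit_or_isUnit hg with hu | hu
  · have := natDegree_eq_zero_of_isUnit hu
    simp at this
  · have h0 := natDegree_eq_zero_of_isUnit hu
    rw [hg, natDegree_mul (X_sub_C_ne_zero c) hgne, natDegree_X_sub_C, h0] at hf2
    simp at hf2

theorem exists_cg {F : Type*} [Field F] (w1 w2 : F) (hw : ¬(w1 = 0 ∧ w2 = 0)) :
    ∃ a b c d : F, a * d - b * c ≠ 0 ∧ w1 * a + w2 * c = 0 ∧ w1 * b + w2 * d = 1 := by
  by_cases h1 : w1 = 0
  · have h2 : w2 ≠ 0 := fun h => hw ⟨h1, h⟩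
    exact ⟨-w2, 0, 0, w2⁻¹, by field_simp; norm_num, by rw [h1]; ring, by rw [h1]; field_simp; norm_num⟩
  · exact ⟨-w2, w1⁻¹, w1, 0, by field_simp; norm_num, by ring, by field_simp; norm_num⟩

end HallAux



set_option maxHeartbeats 1600000 in
/-- Proposition (BF/BF): (i) any ordered pair of distinct intersecting BF lines, with a
marked point `A1` on the first line and off the second, can be mapped by a collineation to
`(y = x·(μ,0), x = (0,0))` with `A1 ↦ ((0,1),(0,μ))` for some `μ ∈ F`; (ii) any ordered
pair of distinct parallel BF lines with a marked point `A1` on the first can be mapped to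
`(y = κ, y = (0,0))` with `A1 ↦ ((0,1),κ)` for some `κ ≠ (0,0)`. -/
theorem BF_BF_normalization {F : Type*} [Field F] [Fintype F] [DecidableEq F]
    (q : ℕ) (hq : Fintype.card F = q) (r s : F)
    (hirr : Irreducible (X ^ 2 - C r * X - C s : F[X])) :
    (∀ (ℓ1 ℓ2 : Set ((F × F) × (F × F))) (A1 : (F × F) × (F × F)),
      ℓ1 ∈ BFlines r s → ℓ2 ∈ BFlines r s → ℓ1 ≠ ℓ2 → (ℓ1 ∩ ℓ2).Nonempty →
      A1 ∈ ℓ1 → A1 ∉ ℓ2 →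
      ∃ μ : F, ∃ φ, IsCollineation r s φ ∧
        φ '' ℓ1 = slopeLine r s (μ, 0) 0 ∧
        φ '' ℓ2 = vertLine ((0 : F × F)) ∧
        φ A1 = ((0, 1), (0, μ))) ∧
    (∀ (ℓ1 ℓ2 : Set ((F × F) × (F × F))) (A1 : (F × F) × (F × F)),
      ℓ1 ∈ BFlines r s → ℓ2 ∈ BFlines r s → ℓ1 ≠ ℓ2 → ℓ1 ∩ ℓ2 = ∅ →
      A1 ∈ ℓ1 →
      ∃ κ : F × F, κ ≠ 0 ∧ ∃ φ, IsCollineation r s φ ∧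
        φ '' ℓ1 = slopeLine r s 0 κ ∧
        φ '' ℓ2 = slopeLine r s 0 0 ∧
        φ A1 = ((0, 1), κ)) := by
  have hroot : ∀ t : F, t ^ 2 - r * t - s ≠ 0 := no_root hirr
  have hs0 : s ≠ 0 := by
    have h0 := hroot 0
    intro h
    apply h0
    rw [h]
    ring
  constructor
  · -- PART (i)
    rintro ℓ1 ℓ2 A1 h1 h2 hne hint hA1 hA2
    obtain ⟨c1, rfl⟩ | ⟨⟨μ1, m12⟩, k1, hm0, rfl⟩ := h1
    · obtain ⟨c2, rfl⟩ | ⟨⟨μ2, m22⟩, k2, hm0', rfl⟩ := h2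
      · -- case 1a: both vertical, impossible
        exfalso
        obtain ⟨P, hP1, hP2⟩ := hint
        simp only [vertLine, Set.mem_setOf_eq] at hP1 hP2
        exact hne (by rw [hP1.symm.trans hP2])
      · -- case 1b: vertical, slope
        obtain rfl : m22 = 0 := hm0'
        simp only [vertLine, Set.mem_setOf_eq] at hA1
        have hc1 : c1 = A1.1 := hA1.symm
        subst hc1
        obtain ⟨a, b, c, d, hD, he0, he1⟩ := exists_cg
          (A1.2.1 - (A1.1.1 * μ2 + k2.1)) (A1.2.2 - (A1.1.2 * μ2 + k2.2)) (by
            rintro ⟨z1, z2⟩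
            apply hA2
            simp only [slopeLine, Set.mem_setOf_eq, hallMul_pair1, Prod.ext_iff,
              Prod.fst_add, Prod.snd_add]
            exact ⟨by linear_combination z1, by linear_combination z2⟩)
        have hcol := comp_col (comp_col
          (trq_col r s (-A1.1) (-(A1.1.1 * μ2 + k2.1), -(A1.1.2 * μ2 + k2.2)))
          (phq_col r s μ2 (hroot μ2))) (cgq_col r s hroot a b c d hD)
        refine ⟨μ2, _, hcol, ?_, ?_, ?_⟩
        · refine image_line_eq r s hcol.1.1 (Or.inl ⟨A1.1, rfl⟩) (Or.inr ⟨_, _, rfl⟩) ?_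
          rintro Q ⟨⟨x, y⟩, hP, rfl⟩
          simp only [vertLine, Set.mem_setOf_eq] at hP
          subst hP
          simp only [Function.comp_apply, trq, phq, cgq, slopeLine, Set.mem_setOf_eq,
            hallMul_pair1, Prod.ext_iff, Prod.fst_add, Prod.snd_add, Prod.fst_neg,
            Prod.snd_neg, add_zero]
          constructor <;> ring
        · refine image_line_eq r s hcol.1.1 (Or.inr ⟨_, _, rfl⟩) (Or.inl ⟨0, rfl⟩) ?_
          rintro Q ⟨⟨x, y⟩, hP, rfl⟩
          simp only [slopeLine, Set.mem_setOf_eq, hallMul_pair1, Prod.ext_iff,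
            Prod.fst_add, Prod.snd_add] at hP
          obtain ⟨e1, e2⟩ := hP
          simp only [Function.comp_apply, trq, phq, cgq, vertLine, Set.mem_setOf_eq,
            Prod.ext_iff, Prod.fst_add, Prod.snd_add, Prod.fst_neg, Prod.snd_neg,
            Prod.fst_zero, Prod.snd_zero]
          constructor <;> (simp only [e1, e2]; ring)
        · simp only [Function.comp_apply, trq, phq, cgq, Prod.ext_iff, Prod.fst_add,
            Prod.snd_add, Prod.fst_neg, Prod.snd_neg]
          refine ⟨⟨?_, ?_⟩, ?_, ?_⟩
          · linear_combination he0
          · linear_combination he1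
          · linear_combination μ2 * he0
          · linear_combination μ2 * he1
    · obtain rfl : m12 = 0 := hm0
      simp only [slopeLine, Set.mem_setOf_eq, hallMul_pair1, Prod.ext_iff,
        Prod.fst_add, Prod.snd_add] at hA1
      obtain ⟨e1, e2⟩ := hA1
      obtain ⟨c2, rfl⟩ | ⟨⟨μ2, m22⟩, k2, hm0', rfl⟩ := h2
      · -- case 1c: slope, vertical
        simp only [vertLine, Set.mem_setOf_eq] at hA2
        obtain ⟨a, b, c, d, hD, he0, he1⟩ := exists_cg
          (A1.1.1 - c2.1) (A1.1.2 - c2.2) (by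
            rintro ⟨z1, z2⟩
            exact hA2 (Prod.ext (by linear_combination z1) (by linear_combination z2)))
        have hcol := comp_col
          (trq_col r s (-c2) (-(c2.1 * μ1 + k1.1), -(c2.2 * μ1 + k1.2)))
          (cgq_col r s hroot a b c d hD)
        refine ⟨μ1, _, hcol, ?_, ?_, ?_⟩
        · refine image_line_eq r s hcol.1.1 (Or.inr ⟨_, _, rfl⟩) (Or.inr ⟨_, _, rfl⟩) ?_
          rintro Q ⟨⟨x, y⟩, hP, rfl⟩
          simp only [slopeLine, Set.mem_setOf_eq, hallMul_pair1, Prod.ext_iff,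
            Prod.fst_add, Prod.snd_add] at hP
          obtain ⟨f1, f2⟩ := hP
          simp only [Function.comp_apply, trq, cgq, slopeLine, Set.mem_setOf_eq,
            hallMul_pair1, Prod.ext_iff, Prod.fst_add, Prod.snd_add, Prod.fst_neg,
            Prod.snd_neg, add_zero]
          constructor <;> (simp only [f1, f2]; ring)
        · refine image_line_eq r s hcol.1.1 (Or.inl ⟨c2, rfl⟩) (Or.inl ⟨0, rfl⟩) ?_
          rintro Q ⟨⟨x, y⟩, hP, rfl⟩
          simp only [vertLine, Set.mem_setOf_eq] at hP
          subst hP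
          simp only [Function.comp_apply, trq, cgq, vertLine, Set.mem_setOf_eq,
            Prod.ext_iff, Prod.fst_add, Prod.snd_add, Prod.fst_neg, Prod.snd_neg,
            Prod.fst_zero, Prod.snd_zero]
          constructor <;> ring
        · simp only [Function.comp_apply, trq, cgq, Prod.ext_iff, Prod.fst_add,
            Prod.snd_add, Prod.fst_neg, Prod.snd_neg]
          refine ⟨⟨?_, ?_⟩, ?_, ?_⟩
          · linear_combination he0
          · linear_combination he1
          · linear_combination μ1 * he0 + a * e1 + c * e2
          · linear_combination μ1 * he1 + b * e1 + d * e2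
      · -- case 1d: slope, slope
        obtain rfl : m22 = 0 := hm0'
        have hμ : μ1 ≠ μ2 := by
          intro h
          obtain ⟨P, hP1, hP2⟩ := hint
          simp only [slopeLine, Set.mem_setOf_eq, hallMul_pair1, Prod.ext_iff,
            Prod.fst_add, Prod.snd_add] at hP1 hP2
          apply hne
          rw [h]
          have hk : k1 = k2 := Prod.ext
            (by linear_combination hP2.1 - hP1.1 - P.1.1 * h)
            (by linear_combination hP2.2 - hP1.2 - P.1.2 * h)
          rw [hk]
        have hd12 : μ1 - μ2 ≠ 0 := sub_ne_zero.mpr hμ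
        simp only [slopeLine, Set.mem_setOf_eq, hallMul_pair1, Prod.ext_iff,
          Prod.fst_add, Prod.snd_add] at hA2
        obtain ⟨a, b, c, d, hD, he0, he1⟩ := exists_cg
          ((μ1 - μ2) * A1.1.1 - (k2.1 - k1.1)) ((μ1 - μ2) * A1.1.2 - (k2.2 - k1.2)) (by
            rintro ⟨z1, z2⟩
            exact hA2 ⟨by linear_combination e1 + z1, by linear_combination e2 + z2⟩)
        have hcol := comp_col (comp_col
          (trq_col r s (-((k2.1 - k1.1) / (μ1 - μ2), (k2.2 - k1.2) / (μ1 - μ2)))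
            (-((k2.1 - k1.1) / (μ1 - μ2) * μ1 + k1.1,
               (k2.2 - k1.2) / (μ1 - μ2) * μ1 + k1.2)))
          (phq_col r s μ2 (hroot μ2))) (cgq_col r s hroot a b c d hD)
        refine ⟨(μ2 * μ1 - r * μ2 - s) / (μ1 - μ2), _, hcol, ?_, ?_, ?_⟩
        · refine image_line_eq r s hcol.1.1 (Or.inr ⟨_, _, rfl⟩) (Or.inr ⟨_, _, rfl⟩) ?_
          rintro Q ⟨⟨x, y⟩, hP, rfl⟩
          simp only [slopeLine, Set.mem_setOf_eq, hallMul_pair1, Prod.ext_iff,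
            Prod.fst_add, Prod.snd_add] at hP
          obtain ⟨f1, f2⟩ := hP
          simp only [Function.comp_apply, trq, phq, cgq, slopeLine, Set.mem_setOf_eq,
            hallMul_pair1, Prod.ext_iff, Prod.fst_add, Prod.snd_add, Prod.fst_neg,
            Prod.snd_neg, add_zero]
          constructor <;> (simp only [f1, f2]; field_simp; ring)
        · refine image_line_eq r s hcol.1.1 (Or.inr ⟨_, _, rfl⟩) (Or.inl ⟨0, rfl⟩) ?_
          rintro Q ⟨⟨x, y⟩, hP, rfl⟩
          simp only [slopeLine, Set.mem_setOf_eq, hallMul_pair1, Prod.ext_iff,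
            Prod.fst_add, Prod.snd_add] at hP
          obtain ⟨f1, f2⟩ := hP
          simp only [Function.comp_apply, trq, phq, cgq, vertLine, Set.mem_setOf_eq,
            Prod.ext_iff, Prod.fst_add, Prod.snd_add, Prod.fst_neg, Prod.snd_neg,
            Prod.fst_zero, Prod.snd_zero]
          constructor <;> (simp only [f1, f2]; field_simp; ring)
        · simp only [Function.comp_apply, trq, phq, cgq, Prod.ext_iff, Prod.fst_add,
            Prod.snd_add, Prod.fst_neg, Prod.snd_neg]
          have hx1 : (μ1 - μ2) * ((k2.1 - k1.1) / (μ1 - μ2)) = k2.1 - k1.1 := by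
            field_simp
          have hx2 : (μ1 - μ2) * ((k2.2 - k1.2) / (μ1 - μ2)) = k2.2 - k1.2 := by
            field_simp
          refine ⟨⟨?_, ?_⟩, ?_, ?_⟩
          · linear_combination he0 - a * hx1 - c * hx2 + a * e1 + c * e2
          · linear_combination he1 - b * hx1 - d * hx2 + b * e1 + d * e2
          · field_simp
            linear_combination (μ2 * μ1 - r * μ2 - s) * he0
              + (μ1 - μ2) * (μ2 * a - 0) * e1 + (μ1 - μ2) * (μ2 * c - 0) * e2
          · field_simp
            linear_combination (μ2 * μ1 - r * μ2 - s) * he1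
              + (μ1 - μ2) * μ2 * b * e1 + (μ1 - μ2) * μ2 * d * e2
  · -- PART (ii)
    rintro ℓ1 ℓ2 A1 h1 h2 hne hdisj hA1
    obtain ⟨c1, rfl⟩ | ⟨⟨μ1, m12⟩, k1, hm0, rfl⟩ := h1
    · obtain ⟨c2, rfl⟩ | ⟨⟨μ2, m22⟩, k2, hm0', rfl⟩ := h2
      · -- case 2a: both vertical
        have hcne : c1 ≠ c2 := fun h => hne (by rw [h])
        simp only [vertLine, Set.mem_setOf_eq] at hA1
        have hc1 : c1 = A1.1 := hA1.symm
        subst hc1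
        refine ⟨(s * (c2.1 - A1.1.1), s * (c2.2 - A1.1.2)), ?_, trq
          (0 - A1.2.1, 1 - A1.2.2) (s * c2.1, s * c2.2) ∘ phq r s 0,
          comp_col (phq_col r s 0 (by simpa using hroot 0)) (trq_col r s _ _), ?_, ?_, ?_⟩
        · intro h
          rw [Prod.mk_eq_zero] at h
          apply hcne
          have w1 : c2.1 = A1.1.1 := by
            have := (mul_eq_zero.mp h.1).resolve_left hs0
            linear_combination this
          have w2 : c2.2 = A1.1.2 := by
            have := (mul_eq_zero.mp h.2).resolve_left hs0
            linear_combination this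
          exact (Prod.ext w1 w2).symm
        · refine image_line_eq r s (comp_col (phq_col r s 0 (by simpa using hroot 0))
            (trq_col r s _ _)).1.1 (Or.inl ⟨A1.1, rfl⟩) (Or.inr ⟨_, _, rfl⟩) ?_
          rintro Q ⟨⟨x, y⟩, hP, rfl⟩
          simp only [vertLine, Set.mem_setOf_eq] at hP
          subst hP
          simp only [Function.comp_apply, trq, phq, slopeLine, Set.mem_setOf_eq,
            hallMul_zero_right, Prod.ext_iff, Prod.fst_add, Prod.snd_add,
            Prod.fst_zero, Prod.snd_zero, zero_add]
          constructor <;> ring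
        · refine image_line_eq r s (comp_col (phq_col r s 0 (by simpa using hroot 0))
            (trq_col r s _ _)).1.1 (Or.inl ⟨c2, rfl⟩) (Or.inr ⟨_, _, rfl⟩) ?_
          rintro Q ⟨⟨x, y⟩, hP, rfl⟩
          simp only [vertLine, Set.mem_setOf_eq] at hP
          subst hP
          simp only [Function.comp_apply, trq, phq, slopeLine, Set.mem_setOf_eq,
            hallMul_zero_right, Prod.ext_iff, Prod.fst_add, Prod.snd_add,
            Prod.fst_zero, Prod.snd_zero, zero_add]
          constructor <;> ring
        · simp only [Function.comp_apply, trq, phq, Prod.ext_iff, Prod.fst_add,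
            Prod.snd_add]
          refine ⟨⟨?_, ?_⟩, ?_, ?_⟩ <;> ring
      · -- case 2 mixed: vertical and slope, impossible
        exfalso
        obtain rfl : m22 = 0 := hm0'
        have : (c1, hallMul r s c1 (μ2, 0) + k2) ∈ vertLine c1 ∩ slopeLine r s (μ2, 0) k2 :=
          ⟨rfl, rfl⟩
        rw [hdisj] at this
        exact this
    · obtain rfl : m12 = 0 := hm0
      obtain ⟨c2, rfl⟩ | ⟨⟨μ2, m22⟩, k2, hm0', rfl⟩ := h2
      · -- case 2 mixed: slope and vertical, impossible
        exfalso
        have : (c2, hallMul r s c2 (μ1, 0) + k1) ∈ slopeLine r s (μ1, 0) k1 ∩ vertLine c2 :=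
          ⟨rfl, rfl⟩
        rw [hdisj] at this
        exact this
      · -- case 2b: both slope
        obtain rfl : m22 = 0 := hm0'
        have hμ : μ1 = μ2 := by
          by_contra h
          have hd12 : μ1 - μ2 ≠ 0 := sub_ne_zero.mpr h
          have hmem : (((k2.1 - k1.1) / (μ1 - μ2), (k2.2 - k1.2) / (μ1 - μ2)),
              ((k2.1 - k1.1) / (μ1 - μ2) * μ1 + k1.1,
               (k2.2 - k1.2) / (μ1 - μ2) * μ1 + k1.2)) ∈
              slopeLine r s (μ1, 0) k1 ∩ slopeLine r s (μ2, 0) k2 := by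
            constructor
            · simp only [slopeLine, Set.mem_setOf_eq, hallMul_pair1, Prod.ext_iff,
                Prod.fst_add, Prod.snd_add]
              exact ⟨trivial, trivial⟩
            · simp only [slopeLine, Set.mem_setOf_eq, hallMul_pair1, Prod.ext_iff,
                Prod.fst_add, Prod.snd_add]
              constructor <;> (field_simp; ring)
          rw [hdisj] at hmem
          exact hmem
        subst hμ
        have hk : k1 ≠ k2 := fun h => hne (by rw [h])
        simp only [slopeLine, Set.mem_setOf_eq, hallMul_pair1, Prod.ext_iff,
          Prod.fst_add, Prod.snd_add] at hA1
        obtain ⟨e1, e2⟩ := hA1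
        refine ⟨(s * (k2.1 - k1.1), s * (k2.2 - k1.2)), ?_,
          trq (0 - ((μ1 ^ 2 - r * μ1 - s) * A1.1.1 + μ1 * k1.1),
               1 - ((μ1 ^ 2 - r * μ1 - s) * A1.1.2 + μ1 * k1.2)) (s * k2.1, s * k2.2) ∘
            phq r s 0 ∘ phq r s μ1,
          comp_col (comp_col (phq_col r s μ1 (hroot μ1)) (phq_col r s 0
            (by simpa using hroot 0))) (trq_col r s _ _), ?_, ?_, ?_⟩
        · intro h
          rw [Prod.mk_eq_zero] at h
          apply hk
          have w1 : k1.1 = k2.1 := by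
            have := (mul_eq_zero.mp h.1).resolve_left hs0
            linear_combination -this
          have w2 : k1.2 = k2.2 := by
            have := (mul_eq_zero.mp h.2).resolve_left hs0
            linear_combination -this
          exact Prod.ext w1 w2
        · refine image_line_eq r s (comp_col (comp_col (phq_col r s μ1 (hroot μ1))
            (phq_col r s 0 (by simpa using hroot 0))) (trq_col r s _ _)).1.1
            (Or.inr ⟨_, _, rfl⟩) (Or.inr ⟨_, _, rfl⟩) ?_
          rintro Q ⟨⟨x, y⟩, hP, rfl⟩
          simp only [slopeLine, Set.mem_setOf_eq, hallMul_pair1, Prod.ext_iff,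
            Prod.fst_add, Prod.snd_add] at hP
          obtain ⟨f1, f2⟩ := hP
          simp only [Function.comp_apply, trq, phq, slopeLine, Set.mem_setOf_eq,
            hallMul_zero_right, Prod.ext_iff, Prod.fst_add, Prod.snd_add,
            Prod.fst_zero, Prod.snd_zero, zero_add]
          constructor <;> (simp only [f1, f2]; ring)
        · refine image_line_eq r s (comp_col (comp_col (phq_col r s μ1 (hroot μ1))
            (phq_col r s 0 (by simpa using hroot 0))) (trq_col r s _ _)).1.1
            (Or.inr ⟨_, _, rfl⟩) (Or.inr ⟨_, _, rfl⟩) ?_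
          rintro Q ⟨⟨x, y⟩, hP, rfl⟩
          simp only [slopeLine, Set.mem_setOf_eq, hallMul_pair1, Prod.ext_iff,
            Prod.fst_add, Prod.snd_add] at hP
          obtain ⟨f1, f2⟩ := hP
          simp only [Function.comp_apply, trq, phq, slopeLine, Set.mem_setOf_eq,
            hallMul_zero_right, Prod.ext_iff, Prod.fst_add, Prod.snd_add,
            Prod.fst_zero, Prod.snd_zero, zero_add]
          constructor <;> (simp only [f1, f2]; ring)
        · simp only [Function.comp_apply, trq, phq, Prod.ext_iff, Prod.fst_add,
            Prod.snd_add]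
          refine ⟨⟨?_, ?_⟩, ?_, ?_⟩
          · linear_combination μ1 * e1
          · linear_combination μ1 * e2
          · linear_combination -s * e1
          · linear_combination -s * e2
end

section
/- (i) For any ordered pair (ℓ1, ℓ2) of intersecting lines of A_H with ℓ1 ∈ NBF and ℓ2 ∈ BF, and any point A1 on ℓ1 not on ℓ2, there exists a collineation φ of A_H such that φ(ℓ1) is the line y = x·(0,1), φ(ℓ2) is the vertical line x = (0,0), and φ(A1) = ((0,1), (s, r)). (ii) For any ordered pair (ℓ1, ℓ2) of intersecting lines of A_H with ℓ1 ∈ BF and ℓ2 ∈ NBF, and any point A1 on ℓ1 not on ℓ2, there exists a collineation φ of A_H such that φ(ℓ1) is the vertical line x = (0,0), φ(ℓ2) is the line y = x·(0,1), and φ(A1) = ((0,0), (0,1)). -/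
open Polynomial

namespace HallAux
set_option linter.unusedSectionVars false

variable {F : Type*} [Field F] [DecidableEq F] (r s : F)

lemma hallMul_zero_left (m : F × F) : hallMul r s 0 m = 0 := by
  unfold hallMul; split <;> simp

lemma hallMul_add_left (x y m : F × F) :
    hallMul r s (x + y) m = hallMul r s x m + hallMul r s y m := by
  unfold hallMul
  split <;> (refine Prod.ext ?_ ?_ <;> simp <;> ring)

lemma hallMul_neg_left (x m : F × F) : hallMul r s (-x) m = - hallMul r s x m := by
  have h := hallMul_add_left r s x (-x) m
  simp [hallMul_zero_left] at h
  linear_combination (norm := module) -h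

lemma ncard_vertLine (c : F × F) :
    (vertLine c : Set ((F × F) × (F × F))).ncard = Nat.card (F × F) := by
  have h : (vertLine c : Set ((F × F) × (F × F))) = (fun y : F × F => (c, y)) '' Set.univ := by
    ext P
    simp only [vertLine, Set.mem_setOf_eq, Set.image_univ, Set.mem_range]
    constructor
    · intro h; exact ⟨P.2, by rw [← h]⟩
    · rintro ⟨y, rfl⟩; rfl
  rw [h, Set.ncard_image_of_injective _ (fun a b hab => (Prod.ext_iff.1 hab).2),
    Set.ncard_univ]

lemma ncard_slopeLine (m k : F × F) :
    (slopeLine r s m k).ncard = Nat.card (F × F) := by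
  have h : slopeLine r s m k = (fun x : F × F => (x, hallMul r s x m + k)) '' Set.univ := by
    ext P
    simp only [slopeLine, Set.mem_setOf_eq, Set.image_univ, Set.mem_range]
    constructor
    · intro h; exact ⟨P.1, by rw [← h]⟩
    · rintro ⟨x, rfl⟩; rfl
  rw [h, Set.ncard_image_of_injective _ (fun a b hab => (Prod.ext_iff.1 hab).1),
    Set.ncard_univ]

lemma image_line_eq [Finite F] {φ : (F × F) × (F × F) → (F × F) × (F × F)}
    (hφ : Function.Injective φ) {L L' : Set ((F × F) × (F × F))}
    (hsub : φ '' L ⊆ L') (hL : L.ncard = Nat.card (F × F))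
    (hL' : L'.ncard = Nat.card (F × F)) : φ '' L = L' := by
  apply Set.eq_of_subset_of_ncard_le hsub ?_ (Set.toFinite _)
  rw [Set.ncard_image_of_injective _ hφ, hL, hL']


/-! ### Translations -/

def trans (v : (F × F) × (F × F)) : (F × F) × (F × F) → (F × F) × (F × F) :=
  fun P => P + v

lemma trans_inj (v : (F × F) × (F × F)) : Function.Injective (trans v) :=
  fun a b h => by simpa [trans] using h

lemma trans_bij (v : (F × F) × (F × F)) : Function.Bijective (trans v) := by
  refine ⟨trans_inj v, fun P => ⟨P - v, ?_⟩⟩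
  simp [trans]

lemma trans_image_vert [Finite F] (v : (F × F) × (F × F)) (c : F × F) :
    trans v '' vertLine c = vertLine (c + v.1) := by
  apply image_line_eq (trans_inj v) ?_ (ncard_vertLine c) (ncard_vertLine _)
  rintro P ⟨Q, hQ, rfl⟩
  simp only [vertLine, Set.mem_setOf_eq] at hQ ⊢
  simp [trans, hQ]

lemma trans_image_slope [Finite F] (v : (F × F) × (F × F)) (m k : F × F) :
    trans v '' slopeLine r s m k = slopeLine r s m (k + v.2 - hallMul r s v.1 m) := by
  apply image_line_eq (trans_inj v) ?_ (ncard_slopeLine r s m k) (ncard_slopeLine r s m _)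
  rintro P ⟨Q, hQ, rfl⟩
  simp only [slopeLine, Set.mem_setOf_eq] at hQ ⊢
  simp only [trans, Prod.snd_add, Prod.fst_add, hallMul_add_left, hQ]
  abel

lemma isHallLine_trans [Finite F] (v : (F × F) × (F × F)) {ℓ : Set ((F × F) × (F × F))}
    (h : IsHallLine r s ℓ) : IsHallLine r s (trans v '' ℓ) := by
  rcases h with ⟨c, rfl⟩ | ⟨m, k, rfl⟩
  · exact Or.inl ⟨c + v.1, trans_image_vert v c⟩
  · exact Or.inr ⟨m, _, trans_image_slope r s v m k⟩

lemma trans_collineation [Finite F] (v : (F × F) × (F × F)) :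
    IsCollineation r s (trans v) :=
  ⟨trans_bij v, fun _ h => isHallLine_trans r s v h⟩

/-! ### Linear maps: reduction to lines through the origin -/

lemma vertLine_eq_trans (c : F × F) :
    (vertLine c : Set ((F × F) × (F × F))) = trans (c, 0) '' vertLine 0 := by
  ext P
  constructor
  · intro hP; exact ⟨P - (c, 0), by simp [vertLine, Prod.ext_iff] at hP ⊢; simp [hP.1, hP.2], by simp [trans]⟩
  · rintro ⟨Q, hQ, rfl⟩
    simp [vertLine] at hQ ⊢
    simp [trans, hQ]

lemma slopeLine_eq_trans (m k : F × F) :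
    slopeLine r s m k = trans (0, k) '' slopeLine r s m 0 := by
  ext P
  constructor
  · intro hP
    refine ⟨P - (0, k), ?_, by simp [trans]⟩
    simp only [slopeLine, Set.mem_setOf_eq] at hP ⊢
    simp [hP]
  · rintro ⟨Q, hQ, rfl⟩
    simp only [slopeLine, Set.mem_setOf_eq] at hQ ⊢
    simp [trans, hQ]

lemma linCol [Finite F] {φ : (F × F) × (F × F) → (F × F) × (F × F)}
    (hadd : ∀ P Q, φ (P + Q) = φ P + φ Q) (hbij : Function.Bijective φ)
    (h0 : IsHallLine r s (φ '' vertLine 0))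
    (hm : ∀ m, IsHallLine r s (φ '' slopeLine r s m 0)) : IsCollineation r s φ := by
  have key : ∀ (v : (F × F) × (F × F)) (S : Set ((F × F) × (F × F))),
      φ '' (trans v '' S) = trans (φ v) '' (φ '' S) := by
    intro v S
    rw [← Set.image_comp, ← Set.image_comp]
    apply congrArg (· '' S)
    funext P
    simp [trans, hadd]
  refine ⟨hbij, ?_⟩
  rintro ℓ (⟨c, rfl⟩ | ⟨m, k, rfl⟩)
  · rw [vertLine_eq_trans, key]
    exact isHallLine_trans r s _ h0
  · rw [slopeLine_eq_trans, key]
    exact isHallLine_trans r s _ (hm m)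

lemma IsCollineation.comp {φ ψ : (F × F) × (F × F) → (F × F) × (F × F)}
    (hψ : IsCollineation r s ψ) (hφ : IsCollineation r s φ) :
    IsCollineation r s (ψ ∘ φ) := by
  refine ⟨hψ.1.comp hφ.1, fun ℓ h => ?_⟩
  rw [Set.image_comp]
  exact hψ.2 _ (hφ.2 _ h)

lemma not_mem_image {φ : (F × F) × (F × F) → (F × F) × (F × F)}
    (hφ : Function.Injective φ) {A : (F × F) × (F × F)} {S : Set ((F × F) × (F × F))}
    (hA : A ∉ S) : φ A ∉ φ '' S := by
  rintro ⟨x, hx, he⟩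
  exact hA (hφ he ▸ hx)


/-! ### Irreducibility: no roots -/

lemma noroot (hirr : Irreducible (X ^ 2 - C r * X - C s : F[X])) :
    ∀ c : F, c ^ 2 - r * c - s ≠ 0 := by
  intro c hc
  have hdeg : (X ^ 2 - C r * X - C s : F[X]).natDegree = 2 := by
    compute_degree!
  have hroot : IsRoot (X ^ 2 - C r * X - C s : F[X]) c := by
    simp [IsRoot, hc]
  obtain ⟨g, hg⟩ := (dvd_iff_isRoot).2 hroot
  have hne : (X ^ 2 - C r * X - C s : F[X]) ≠ 0 := fun h => by
    rw [h] at hdeg; simp at hdeg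
  have hXc : (X - C c : F[X]).natDegree = 1 := natDegree_X_sub_C c
  have hgne : g ≠ 0 := fun h => hne (by rw [hg, h, mul_zero])
  have hdg : g.natDegree = 1 := by
    have := natDegree_mul (X_sub_C_ne_zero c) hgne
    rw [← hg, hdeg, hXc] at this
    omega
  rcases hirr.isUnit_or_isUnit hg with hu | hu
  · have := natDegree_eq_zero_of_isUnit hu
    rw [hXc] at this; exact one_ne_zero this
  · have := natDegree_eq_zero_of_isUnit hu
    rw [hdg] at this; exact one_ne_zero this

lemma s_ne_zero (hirr : Irreducible (X ^ 2 - C r * X - C s : F[X])) : s ≠ 0 := by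
  have := noroot r s hirr 0
  intro h; apply this; rw [h]; ring


/-! ### The collineations Λ_{a,b} -/

def lam (r s a b : F) : (F × F) × (F × F) → (F × F) × (F × F) :=
  fun P => ((a * P.1.1 + b * P.2.1, a * P.1.2 + b * P.2.2),
            (b * s * P.1.1 + (a + b * r) * P.2.1, b * s * P.1.2 + (a + b * r) * P.2.2))

variable {a b : F}

lemma lam_add (P Q : (F × F) × (F × F)) :
    lam r s a b (P + Q) = lam r s a b P + lam r s a b Q := by
  simp only [lam, Prod.fst_add, Prod.snd_add, Prod.mk_add_mk]
  refine Prod.ext (Prod.ext ?_ ?_) (Prod.ext ?_ ?_) <;> simp <;> ring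

lemma lam_inj (hd : a ^ 2 + a * b * r - b ^ 2 * s ≠ 0) :
    Function.Injective (lam r s a b) := by
  have aux : ∀ x y x' y' : F, a * x + b * y = a * x' + b * y' →
      b * s * x + (a + b * r) * y = b * s * x' + (a + b * r) * y' → x = x' ∧ y = y' := by
    intro x y x' y' h1 h2
    have hx : (a ^ 2 + a * b * r - b ^ 2 * s) * (x - x') = 0 := by
      linear_combination (a + b * r) * h1 - b * h2
    have hy : (a ^ 2 + a * b * r - b ^ 2 * s) * (y - y') = 0 := by
      linear_combination a * h2 - b * s * h1
    constructor
    · exact sub_eq_zero.1 ((mul_eq_zero.1 hx).resolve_left hd)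
    · exact sub_eq_zero.1 ((mul_eq_zero.1 hy).resolve_left hd)
  intro P Q h
  simp only [lam, Prod.mk.injEq] at h
  obtain ⟨⟨h1, h2⟩, h3, h4⟩ := h
  obtain ⟨e1, e2⟩ := aux P.1.1 P.2.1 Q.1.1 Q.2.1 h1 h3
  obtain ⟨e3, e4⟩ := aux P.1.2 P.2.2 Q.1.2 Q.2.2 h2 h4
  exact Prod.ext (Prod.ext e1 e3) (Prod.ext e2 e4)

lemma lam_bij [Finite F] (hd : a ^ 2 + a * b * r - b ^ 2 * s ≠ 0) :
    Function.Bijective (lam r s a b) :=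
  Finite.injective_iff_bijective.1 (lam_inj r s hd)

lemma lam_image_vert0_of_b0 [Finite F] (hd : a ^ 2 + a * b * r - b ^ 2 * s ≠ 0)
    (hb : b = 0) : lam r s a b '' vertLine 0 = vertLine 0 := by
  apply image_line_eq (lam_inj r s hd) ?_ (ncard_vertLine 0) (ncard_vertLine 0)
  rintro P ⟨Q, hQ, rfl⟩
  simp only [vertLine, Set.mem_setOf_eq, Prod.ext_iff] at hQ ⊢
  simp [lam, hQ.1, hQ.2, hb]

lemma lam_image_vert0_of_bne [Finite F] (hd : a ^ 2 + a * b * r - b ^ 2 * s ≠ 0)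
    (hb : b ≠ 0) :
    lam r s a b '' vertLine 0 = slopeLine r s ((a + b * r) / b, 0) 0 := by
  apply image_line_eq (lam_inj r s hd) ?_ (ncard_vertLine 0) (ncard_slopeLine r s _ _)
  rintro P ⟨⟨⟨x1, x2⟩, y1, y2⟩, hQ, rfl⟩
  simp only [vertLine, Set.mem_setOf_eq, Prod.mk.injEq, Prod.mk_eq_zero] at hQ
  obtain ⟨hx1, hx2⟩ := hQ
  simp only [slopeLine, Set.mem_setOf_eq, lam, hallMul,
    eq_self_iff_true, if_true, add_zero, Prod.mk.injEq, hx1, hx2]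
  constructor <;> field_simp <;> ring

lemma lam_image_bfslope_vert [Finite F] (hd : a ^ 2 + a * b * r - b ^ 2 * s ≠ 0)
    (n : F) (hn : a + b * n = 0) :
    lam r s a b '' slopeLine r s (n, 0) 0 = vertLine 0 := by
  apply image_line_eq (lam_inj r s hd) ?_ (ncard_slopeLine r s _ _) (ncard_vertLine 0)
  rintro P ⟨⟨⟨x1, x2⟩, y1, y2⟩, hQ, rfl⟩
  simp only [slopeLine, Set.mem_setOf_eq, hallMul,
    eq_self_iff_true, if_true, add_zero, Prod.mk.injEq] at hQ
  obtain ⟨hy1, hy2⟩ := hQ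
  simp only [vertLine, Set.mem_setOf_eq, lam,
    Prod.mk_eq_zero, hy1, hy2]
  constructor
  · linear_combination x1 * hn
  · linear_combination x2 * hn

lemma lam_image_bfslope_slope [Finite F] (hd : a ^ 2 + a * b * r - b ^ 2 * s ≠ 0)
    (n : F) (hn : a + b * n ≠ 0) :
    lam r s a b '' slopeLine r s (n, 0) 0 =
      slopeLine r s ((b * s + (a + b * r) * n) / (a + b * n), 0) 0 := by
  apply image_line_eq (lam_inj r s hd) ?_ (ncard_slopeLine r s _ _) (ncard_slopeLine r s _ _)
  rintro P ⟨⟨⟨x1, x2⟩, y1, y2⟩, hQ, rfl⟩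
  simp only [slopeLine, Set.mem_setOf_eq, hallMul,
    eq_self_iff_true, if_true, add_zero, Prod.mk.injEq] at hQ
  obtain ⟨hy1, hy2⟩ := hQ
  simp only [slopeLine, Set.mem_setOf_eq, lam, hallMul,
    eq_self_iff_true, if_true, add_zero, Prod.mk.injEq, hy1, hy2]
  constructor <;> field_simp <;> ring

lemma lam_image_nbfslope [Finite F] (hd : a ^ 2 + a * b * r - b ^ 2 * s ≠ 0)
    (m : F × F) (hm2 : m.2 ≠ 0) :
    lam r s a b '' slopeLine r s m 0 = slopeLine r s m 0 := by
  apply image_line_eq (lam_inj r s hd) ?_ (ncard_slopeLine r s _ _) (ncard_slopeLine r s _ _)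
  rintro P ⟨⟨⟨x1, x2⟩, y1, y2⟩, hQ, rfl⟩
  simp only [slopeLine, Set.mem_setOf_eq, hallMul, if_neg hm2,
    add_zero, Prod.mk.injEq] at hQ
  obtain ⟨hy1, hy2⟩ := hQ
  simp only [slopeLine, Set.mem_setOf_eq, lam, hallMul, if_neg hm2,
    add_zero, Prod.mk.injEq, hy1, hy2]
  constructor <;> field_simp <;> ring

lemma lam_collineation [Finite F] (hd : a ^ 2 + a * b * r - b ^ 2 * s ≠ 0) :
    IsCollineation r s (lam r s a b) := by
  apply linCol r s (lam_add r s) (lam_bij r s hd)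
  · by_cases hb : b = 0
    · exact Or.inl ⟨0, lam_image_vert0_of_b0 r s hd hb⟩
    · exact Or.inr ⟨_, _, lam_image_vert0_of_bne r s hd hb⟩
  · intro m
    by_cases hm2 : m.2 = 0
    · have hm : m = (m.1, 0) := Prod.ext rfl hm2
      rw [hm]
      by_cases hn : a + b * m.1 = 0
      · exact Or.inl ⟨0, lam_image_bfslope_vert r s hd m.1 hn⟩
      · exact Or.inr ⟨_, _, lam_image_bfslope_slope r s hd m.1 hn⟩
    · exact Or.inr ⟨m, 0, lam_image_nbfslope r s hd m hm2⟩


/-! ### The collineations Φ_B -/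

def phiB (b11 b12 b21 b22 : F) : (F × F) × (F × F) → (F × F) × (F × F) :=
  fun P => ((P.1.1 * b11 + P.1.2 * b21, P.1.1 * b12 + P.1.2 * b22),
            (P.2.1 * b11 + P.2.2 * b21, P.2.1 * b12 + P.2.2 * b22))

variable {b11 b12 b21 b22 : F}

lemma phiB_add (P Q : (F × F) × (F × F)) :
    phiB b11 b12 b21 b22 (P + Q) = phiB b11 b12 b21 b22 P + phiB b11 b12 b21 b22 Q := by
  simp only [phiB, Prod.fst_add, Prod.snd_add, Prod.mk_add_mk]
  refine Prod.ext (Prod.ext ?_ ?_) (Prod.ext ?_ ?_) <;> simp <;> ring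

lemma phiB_inj (hdet : b11 * b22 - b12 * b21 ≠ 0) :
    Function.Injective (phiB b11 b12 b21 b22) := by
  have aux : ∀ x1 x2 x1' x2' : F, x1 * b11 + x2 * b21 = x1' * b11 + x2' * b21 →
      x1 * b12 + x2 * b22 = x1' * b12 + x2' * b22 → x1 = x1' ∧ x2 = x2' := by
    intro x1 x2 x1' x2' h1 h2
    have hx : (b11 * b22 - b12 * b21) * (x1 - x1') = 0 := by
      linear_combination b22 * h1 - b21 * h2
    have hy : (b11 * b22 - b12 * b21) * (x2 - x2') = 0 := by
      linear_combination b11 * h2 - b12 * h1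
    exact ⟨sub_eq_zero.1 ((mul_eq_zero.1 hx).resolve_left hdet),
      sub_eq_zero.1 ((mul_eq_zero.1 hy).resolve_left hdet)⟩
  intro P Q h
  simp only [phiB, Prod.mk.injEq] at h
  obtain ⟨⟨h1, h2⟩, h3, h4⟩ := h
  obtain ⟨e1, e2⟩ := aux P.1.1 P.1.2 Q.1.1 Q.1.2 h1 h2
  obtain ⟨e3, e4⟩ := aux P.2.1 P.2.2 Q.2.1 Q.2.2 h3 h4
  exact Prod.ext (Prod.ext e1 e2) (Prod.ext e3 e4)

lemma phiB_bij [Finite F] (hdet : b11 * b22 - b12 * b21 ≠ 0) :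
    Function.Bijective (phiB b11 b12 b21 b22) :=
  Finite.injective_iff_bijective.1 (phiB_inj hdet)

lemma phiB_image_vert0 [Finite F] (hdet : b11 * b22 - b12 * b21 ≠ 0) :
    phiB b11 b12 b21 b22 '' vertLine 0 = vertLine 0 := by
  apply image_line_eq (phiB_inj hdet) ?_ (ncard_vertLine 0) (ncard_vertLine 0)
  rintro P ⟨⟨⟨x1, x2⟩, y1, y2⟩, hQ, rfl⟩
  simp only [vertLine, Set.mem_setOf_eq, Prod.mk_eq_zero] at hQ
  obtain ⟨hx1, hx2⟩ := hQ
  simp only [vertLine, Set.mem_setOf_eq, phiB, Prod.mk_eq_zero, hx1, hx2]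
  constructor <;> ring

lemma phiB_image_bfslope [Finite F] (hdet : b11 * b22 - b12 * b21 ≠ 0) (n : F) :
    phiB b11 b12 b21 b22 '' slopeLine r s (n, 0) 0 = slopeLine r s (n, 0) 0 := by
  apply image_line_eq (phiB_inj hdet) ?_ (ncard_slopeLine r s _ _) (ncard_slopeLine r s _ _)
  rintro P ⟨⟨⟨x1, x2⟩, y1, y2⟩, hQ, rfl⟩
  simp only [slopeLine, Set.mem_setOf_eq, hallMul, eq_self_iff_true, if_true,
    add_zero, Prod.mk.injEq] at hQ
  obtain ⟨hy1, hy2⟩ := hQ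
  simp only [slopeLine, Set.mem_setOf_eq, phiB, hallMul, eq_self_iff_true, if_true,
    add_zero, Prod.mk.injEq, hy1, hy2]
  constructor <;> ring

lemma hallMul_of_ne (n : F × F) (hn2 : n.2 ≠ 0) (z : F × F) :
    hallMul r s z n = (z.1 * n.1 - z.2 * ((n.1 ^ 2 - r * n.1 - s) / n.2),
      z.1 * n.2 - z.2 * n.1 + z.2 * r) := by
  simp only [hallMul, if_neg hn2]
  refine Prod.ext ?_ rfl
  simp only
  field_simp

lemma phiB_image_nbfslope [Finite F] (hfne : ∀ c : F, c ^ 2 - r * c - s ≠ 0)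
    (hdet : b11 * b22 - b12 * b21 ≠ 0) (m : F × F) (hm2 : m.2 ≠ 0) :
    ∃ n : F × F, n.2 ≠ 0 ∧
      phiB b11 b12 b21 b22 '' slopeLine r s m 0 = slopeLine r s n 0 := by
  obtain ⟨m1, m2⟩ := m
  replace hm2 : m2 ≠ 0 := hm2
  set d : F := b11 * b22 - b12 * b21 with hd
  set M21 : F := -((m1 ^ 2 - r * m1 - s) / m2) with hM21
  set N11 : F := (b22 * (m1 * b11 + m2 * b21) - b12 * (M21 * b11 + (r - m1) * b21)) / d
    with hN11
  set N12 : F := (b22 * (m1 * b12 + m2 * b22) - b12 * (M21 * b12 + (r - m1) * b22)) / d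
    with hN12
  set N21 : F := (-b21 * (m1 * b11 + m2 * b21) + b11 * (M21 * b11 + (r - m1) * b21)) / d
    with hN21
  set N22 : F := (-b21 * (m1 * b12 + m2 * b22) + b11 * (M21 * b12 + (r - m1) * b22)) / d
    with hN22
  have hdne : d ≠ 0 := hdet
  have hF1 : N11 + N22 = r := by
    rw [hN11, hN22, hM21]; field_simp; ring
  have hF2 : N11 * N22 - N12 * N21 = -s := by
    rw [hN11, hN22, hN12, hN21, hM21]; field_simp; ring
  have hval : N11 ^ 2 - r * N11 - s = -(N12 * N21) := by
    linear_combination N11 * hF1 - hF2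
  have hN12ne : N12 ≠ 0 := by
    intro h0
    exact hfne N11 (by rw [hval, h0]; ring)
  have hdiv : (N11 ^ 2 - r * N11 - s) / N12 = -N21 := by
    field_simp
    linear_combination hval
  refine ⟨(N11, N12), hN12ne, ?_⟩
  apply image_line_eq (phiB_inj hdet) ?_ (ncard_slopeLine r s _ _) (ncard_slopeLine r s _ _)
  rintro P ⟨⟨⟨x1, x2⟩, y1, y2⟩, hQ, rfl⟩
  simp only [slopeLine, Set.mem_setOf_eq, hallMul_of_ne r s (m1, m2) hm2, add_zero,
    Prod.mk.injEq] at hQ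
  obtain ⟨hy1, hy2⟩ := hQ
  simp only [slopeLine, Set.mem_setOf_eq, phiB, hallMul_of_ne r s (N11, N12) hN12ne, add_zero,
    Prod.mk.injEq]
  simp only [hdiv]
  constructor
  · rw [hy1, hy2, hN11, hN21, hM21]
    field_simp
    ring
  · rw [hy1, hy2, hN12, hN11, hM21]
    field_simp
    ring

lemma phiB_collineation [Finite F] (hfne : ∀ c : F, c ^ 2 - r * c - s ≠ 0)
    (hdet : b11 * b22 - b12 * b21 ≠ 0) :
    IsCollineation r s (phiB b11 b12 b21 b22) := by
  apply linCol r s (phiB_add) (phiB_bij hdet)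
  · exact Or.inl ⟨0, phiB_image_vert0 hdet⟩
  · intro m
    by_cases hm2 : m.2 = 0
    · have hm : m = (m.1, 0) := Prod.ext rfl hm2
      rw [hm]
      exact Or.inr ⟨_, _, phiB_image_bfslope r s hdet m.1⟩
    · obtain ⟨n, _, hn⟩ := phiB_image_nbfslope r s hfne hdet m hm2
      exact Or.inr ⟨n, 0, hn⟩


/-! ### The specific map B sending u to (0,1) and normalizing the slope m -/

def keyD (r s u1 u2 m1 m2 : F) : F :=
  u1 * (u1 * m2 - u2 * m1 + u2 * r) - u2 * (u1 * m1 - u2 * ((m1 ^ 2 - r * m1 - s) / m2))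

def keyB11 (r s u1 u2 m1 m2 : F) : F := (-u2 * s) / keyD r s u1 u2 m1 m2
def keyB12 (r s u1 u2 m1 m2 : F) : F :=
  ((u1 * m2 - u2 * m1 + u2 * r) - u2 * r) / keyD r s u1 u2 m1 m2
def keyB21 (r s u1 u2 m1 m2 : F) : F := (u1 * s) / keyD r s u1 u2 m1 m2
def keyB22 (r s u1 u2 m1 m2 : F) : F :=
  (u1 * r - (u1 * m1 - u2 * ((m1 ^ 2 - r * m1 - s) / m2))) / keyD r s u1 u2 m1 m2

def bact (b11 b12 b21 b22 : F) (x : F × F) : F × F :=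
  (x.1 * b11 + x.2 * b21, x.1 * b12 + x.2 * b22)

lemma phiB_eq (P : (F × F) × (F × F)) :
    phiB b11 b12 b21 b22 P = (bact b11 b12 b21 b22 P.1, bact b11 b12 b21 b22 P.2) := rfl

variable {u1 u2 m1 m2 : F}

lemma keyD_ne (hfne : ∀ c : F, c ^ 2 - r * c - s ≠ 0) (hm2 : m2 ≠ 0)
    (hu : ¬(u1 = 0 ∧ u2 = 0)) : keyD r s u1 u2 m1 m2 ≠ 0 := by
  intro h0
  unfold keyD at h0
  by_cases hu2 : u2 = 0
  · have hu1 : u1 ≠ 0 := fun h => hu ⟨h, hu2⟩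
    subst hu2
    apply mul_ne_zero (mul_ne_zero hu1 hu1) hm2
    linear_combination h0
  · apply hfne (m1 - u1 * m2 / u2)
    field_simp at h0 ⊢
    linear_combination h0

lemma key_det (hfne : ∀ c : F, c ^ 2 - r * c - s ≠ 0) (hs : s ≠ 0) (hm2 : m2 ≠ 0)
    (hu : ¬(u1 = 0 ∧ u2 = 0)) :
    keyB11 r s u1 u2 m1 m2 * keyB22 r s u1 u2 m1 m2 -
      keyB12 r s u1 u2 m1 m2 * keyB21 r s u1 u2 m1 m2 ≠ 0 := by
  have hD := keyD_ne r s (u1 := u1) (u2 := u2) (m1 := m1) hfne hm2 hu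
  have heq : keyB11 r s u1 u2 m1 m2 * keyB22 r s u1 u2 m1 m2 -
      keyB12 r s u1 u2 m1 m2 * keyB21 r s u1 u2 m1 m2 =
      -s / keyD r s u1 u2 m1 m2 := by
    unfold keyB11 keyB12 keyB21 keyB22
    field_simp
    unfold keyD
    field_simp
    ring
  rw [heq]
  exact div_ne_zero (neg_ne_zero.2 hs) hD

lemma key_bact_u (hfne : ∀ c : F, c ^ 2 - r * c - s ≠ 0) (hm2 : m2 ≠ 0)
    (hu : ¬(u1 = 0 ∧ u2 = 0)) :
    bact (keyB11 r s u1 u2 m1 m2) (keyB12 r s u1 u2 m1 m2) (keyB21 r s u1 u2 m1 m2)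
      (keyB22 r s u1 u2 m1 m2) (u1, u2) = (0, 1) := by
  have hD := keyD_ne r s (u1 := u1) (u2 := u2) (m1 := m1) hfne hm2 hu
  unfold bact keyB11 keyB12 keyB21 keyB22
  refine Prod.ext ?_ ?_ <;> simp only
  · field_simp
    ring
  · field_simp
    unfold keyD
    field_simp
    try ring
    try exact Or.inl trivial

lemma key_bact_w (hfne : ∀ c : F, c ^ 2 - r * c - s ≠ 0) (hm2 : m2 ≠ 0)
    (hu : ¬(u1 = 0 ∧ u2 = 0)) :
    bact (keyB11 r s u1 u2 m1 m2) (keyB12 r s u1 u2 m1 m2) (keyB21 r s u1 u2 m1 m2)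
      (keyB22 r s u1 u2 m1 m2) (hallMul r s (u1, u2) (m1, m2)) = (s, r) := by
  have hD := keyD_ne r s (u1 := u1) (u2 := u2) (m1 := m1) hfne hm2 hu
  rw [hallMul_of_ne r s (m1, m2) hm2]
  unfold bact keyB11 keyB12 keyB21 keyB22
  refine Prod.ext ?_ ?_ <;> simp only
  · field_simp
    unfold keyD
    field_simp
    try ring
    try exact Or.inl trivial
  · field_simp
    unfold keyD
    field_simp
    try ring
    try exact Or.inl trivial

lemma key_bact_slope (hfne : ∀ c : F, c ^ 2 - r * c - s ≠ 0) (hm2 : m2 ≠ 0)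
    (hu : ¬(u1 = 0 ∧ u2 = 0)) (x : F × F) :
    bact (keyB11 r s u1 u2 m1 m2) (keyB12 r s u1 u2 m1 m2) (keyB21 r s u1 u2 m1 m2)
      (keyB22 r s u1 u2 m1 m2) (hallMul r s x (m1, m2)) =
      hallMul r s (bact (keyB11 r s u1 u2 m1 m2) (keyB12 r s u1 u2 m1 m2)
        (keyB21 r s u1 u2 m1 m2) (keyB22 r s u1 u2 m1 m2) x) ((0 : F), (1 : F)) := by
  have hD := keyD_ne r s (u1 := u1) (u2 := u2) (m1 := m1) hfne hm2 hu
  obtain ⟨x1, x2⟩ := x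
  rw [hallMul_of_ne r s (m1, m2) hm2, hallMul_of_ne r s ((0 : F), (1 : F)) one_ne_zero]
  unfold bact keyB11 keyB12 keyB21 keyB22
  refine Prod.ext ?_ ?_ <;> simp only
  · field_simp
    try ring
    try exact Or.inl trivial
  · field_simp
    try ring
    try exact Or.inl trivial

lemma key [Finite F] (hfne : ∀ c : F, c ^ 2 - r * c - s ≠ 0) (hs : s ≠ 0)
    (m : F × F) (hm2 : m.2 ≠ 0) (u : F × F) (hu : u ≠ 0) :
    ∃ φ, IsCollineation r s φ ∧
      φ '' slopeLine r s m 0 = slopeLine r s (0, 1) 0 ∧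
      φ '' vertLine 0 = vertLine 0 ∧
      φ (u, hallMul r s u m) = ((0, 1), (s, r)) ∧
      φ (0, u) = (0, (0, 1)) := by
  obtain ⟨u1, u2⟩ := u
  obtain ⟨m1, m2⟩ := m
  replace hm2 : m2 ≠ 0 := hm2
  have hu' : ¬(u1 = 0 ∧ u2 = 0) := by
    intro ⟨h1, h2⟩; exact hu (by rw [h1, h2]; rfl)
  have hdet := key_det r s (u1 := u1) (u2 := u2) (m1 := m1) (m2 := m2) hfne hs hm2 hu'
  refine ⟨phiB (keyB11 r s u1 u2 m1 m2) (keyB12 r s u1 u2 m1 m2) (keyB21 r s u1 u2 m1 m2)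
    (keyB22 r s u1 u2 m1 m2), phiB_collineation r s hfne hdet, ?_, ?_, ?_, ?_⟩
  · apply image_line_eq (phiB_inj hdet) ?_ (ncard_slopeLine r s _ _) (ncard_slopeLine r s _ _)
    rintro P ⟨Q, hQ, rfl⟩
    simp only [slopeLine, Set.mem_setOf_eq, add_zero] at hQ ⊢
    rw [phiB_eq, hQ]
    exact key_bact_slope r s hfne hm2 hu' Q.1
  · exact phiB_image_vert0 hdet
  · rw [phiB_eq]
    dsimp only
    rw [key_bact_u r s hfne hm2 hu', key_bact_w r s hfne hm2 hu']
  · rw [phiB_eq]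
    dsimp only
    rw [key_bact_u r s hfne hm2 hu']
    have h0 : bact (keyB11 r s u1 u2 m1 m2) (keyB12 r s u1 u2 m1 m2)
        (keyB21 r s u1 u2 m1 m2) (keyB22 r s u1 u2 m1 m2) (0 : F × F) = 0 := by
      unfold bact
      simp
    rw [h0]

/-! ### Normalization of the BF/NBF pair through a common point -/

lemma normBF [Finite F] (hfne : ∀ c : F, c ^ 2 - r * c - s ≠ 0)
    {ℓB : Set ((F × F) × (F × F))}
    (hB : (∃ c : F × F, ℓB = vertLine c) ∨ ∃ n k2 : F × F, n.2 = 0 ∧ ℓB = slopeLine r s n k2)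
    (m k : F × F) (hm2 : m.2 ≠ 0) (P : (F × F) × (F × F))
    (hP1 : P ∈ slopeLine r s m k) (hP2 : P ∈ ℓB) :
    ∃ ψ, IsCollineation r s ψ ∧ ψ '' slopeLine r s m k = slopeLine r s m 0 ∧
      ψ '' ℓB = vertLine 0 := by
  have hP1' : P.2 = hallMul r s P.1 m + k := hP1
  have hslope : trans (-P) '' slopeLine r s m k = slopeLine r s m 0 := by
    rw [trans_image_slope]
    congr 1
    rw [Prod.fst_neg, Prod.snd_neg, hallMul_neg_left, hP1']
    abel
  rcases hB with ⟨c, rfl⟩ | ⟨n, k2, hn2, rfl⟩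
  · have hvert : trans (-P) '' vertLine c = vertLine 0 := by
      rw [trans_image_vert]
      congr 1
      have : P.1 = c := hP2
      rw [Prod.fst_neg, this]
      abel
    exact ⟨trans (-P), trans_collineation r s (-P), hslope, hvert⟩
  · have hn : n = (n.1, 0) := Prod.ext rfl hn2
    have hP2' : P.2 = hallMul r s P.1 n + k2 := hP2
    have hbf : trans (-P) '' slopeLine r s n k2 = slopeLine r s (n.1, 0) 0 := by
      rw [trans_image_slope]
      rw [← hn]
      congr 1
      rw [Prod.fst_neg, Prod.snd_neg, hallMul_neg_left, hP2']
      abel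
    have hd : (-n.1) ^ 2 + (-n.1) * 1 * r - 1 ^ 2 * s ≠ 0 := by
      intro h
      exact hfne n.1 (by linear_combination h)
    refine ⟨lam r s (-n.1) 1 ∘ trans (-P),
      IsCollineation.comp r s (lam_collineation r s hd) (trans_collineation r s (-P)), ?_, ?_⟩
    · rw [Set.image_comp, hslope]
      exact lam_image_nbfslope r s hd m hm2
    · rw [Set.image_comp, hbf]
      exact lam_image_bfslope_vert r s hd n.1 (by ring)
end HallAux

/-- Proposition (NBF/BF and BF/NBF): (i) any intersecting pair with the first line in NBF
and the second in BF, with a marked point `A1` on the first line and off the second, can be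
mapped by a collineation to `(y = x·(0,1), x = (0,0))` with `A1 ↦ ((0,1),(s,r))`; (ii) any
intersecting pair with the first line in BF and the second in NBF, with a marked point
`A1` on the first line and off the second, can be mapped to `(x = (0,0), y = x·(0,1))`
with `A1 ↦ ((0,0),(0,1))`. -/
theorem NBF_BF_normalization {F : Type*} [Field F] [Fintype F] [DecidableEq F]
    (q : ℕ) (hq : Fintype.card F = q) (r s : F)
    (hirr : Irreducible (X ^ 2 - C r * X - C s : F[X])) :
    (∀ (ℓ1 ℓ2 : Set ((F × F) × (F × F))) (A1 : (F × F) × (F × F)),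
      ℓ1 ∈ NBFlines r s → ℓ2 ∈ BFlines r s → (ℓ1 ∩ ℓ2).Nonempty →
      A1 ∈ ℓ1 → A1 ∉ ℓ2 →
      ∃ φ, IsCollineation r s φ ∧
        φ '' ℓ1 = slopeLine r s (0, 1) 0 ∧
        φ '' ℓ2 = vertLine ((0 : F × F)) ∧
        φ A1 = ((0, 1), (s, r))) ∧
    (∀ (ℓ1 ℓ2 : Set ((F × F) × (F × F))) (A1 : (F × F) × (F × F)),
      ℓ1 ∈ BFlines r s → ℓ2 ∈ NBFlines r s → (ℓ1 ∩ ℓ2).Nonempty →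
      A1 ∈ ℓ1 → A1 ∉ ℓ2 →
      ∃ φ, IsCollineation r s φ ∧
        φ '' ℓ1 = vertLine ((0 : F × F)) ∧
        φ '' ℓ2 = slopeLine r s (0, 1) 0 ∧
        φ A1 = ((0, 0), (0, 1))) := by
  have hfne := HallAux.noroot r s hirr
  have hs := HallAux.s_ne_zero r s hirr
  constructor
  · rintro ℓ1 ℓ2 A1 ⟨m, k, hm2, rfl⟩ hB ⟨P, hP1, hP2⟩ hA1 hA2
    obtain ⟨ψ, hψcol, hψ1, hψ2⟩ := HallAux.normBF r s hfne hB m k hm2 P hP1 hP2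
    set A' := ψ A1 with hA'
    have hmem1 : A' ∈ slopeLine r s m 0 := by
      rw [← hψ1]; exact Set.mem_image_of_mem ψ hA1
    have hmem2 : A' ∉ vertLine (0 : F × F) := by
      rw [← hψ2]; exact HallAux.not_mem_image hψcol.1.1 hA2
    have hu : A'.1 ≠ 0 := hmem2
    have hval : A'.2 = hallMul r s A'.1 m := by
      have := hmem1
      simpa [slopeLine] using this
    obtain ⟨φB, hφBcol, hφB1, hφB2, hφB3, _⟩ := HallAux.key r s hfne hs m hm2 A'.1 hu
    refine ⟨φB ∘ ψ, HallAux.IsCollineation.comp r s hφBcol hψcol, ?_, ?_, ?_⟩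
    · rw [Set.image_comp, hψ1, hφB1]
    · rw [Set.image_comp, hψ2, hφB2]
    · have hA'eq : A' = (A'.1, hallMul r s A'.1 m) := Prod.ext rfl hval
      show φB (ψ A1) = _
      rw [← hA', hA'eq, hφB3]
  · rintro ℓ1 ℓ2 A1 hB ⟨m, k, hm2, rfl⟩ ⟨P, hP1, hP2⟩ hA1 hA2
    obtain ⟨ψ, hψcol, hψ2, hψ1⟩ := HallAux.normBF r s hfne hB m k hm2 P hP2 hP1
    set A' := ψ A1 with hA'
    have hmem1 : A' ∈ vertLine (0 : F × F) := by
      rw [← hψ1]; exact Set.mem_image_of_mem ψ hA1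
    have hmem2 : A' ∉ slopeLine r s m 0 := by
      rw [← hψ2]; exact HallAux.not_mem_image hψcol.1.1 hA2
    have hx : A'.1 = 0 := hmem1
    have hv : A'.2 ≠ 0 := by
      intro h0
      apply hmem2
      show A'.2 = hallMul r s A'.1 m + 0
      rw [h0, hx, HallAux.hallMul_zero_left, add_zero]
    obtain ⟨φB, hφBcol, hφB2, hφB1, _, hφB4⟩ := HallAux.key r s hfne hs m hm2 A'.2 hv
    refine ⟨φB ∘ ψ, HallAux.IsCollineation.comp r s hφBcol hψcol, ?_, ?_, ?_⟩
    · rw [Set.image_comp, hψ1, hφB1]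
    · rw [Set.image_comp, hψ2, hφB2]
    · have hA'eq : A' = (0, A'.2) := Prod.ext hx rfl
      show φB (ψ A1) = _
      rw [← hA', hA'eq, hφB4]
      rfl
end
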